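/- Let q > 0 with q ≠ 1, and let μ* = ⊗_{k∈ℤ} Ber(q^{−k}/(1+q^{−k})) on {0,1}^ℤ with shift τ. Then for every n ∈ ℤ, the conditional measure μ_{(n)} := μ*(· | A_n) satisfies μ_{(n)} ∘ τ^{−1} = μ_{(n−1)}, where A_n = {η : Σ_{i≤0}(1−η(i)) + Σ_{i≥1}η(i) < ∞ and Σ_{i≥1}η(i) − Σ_{i≤0}(1−η(i)) = n}. -/

import Mathlib

open MeasureTheory ProbabilityTheory

/-- The left shift `(τη)(i) = η(i+1)` on configurations. -/
def shiftConf (η : ℤ → Bool) : ℤ → Bool := fun i => η (i + 1)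

/-- The blocking component `A_n`: configurations with finitely many holes on
`(-∞, 0]`, finitely many particles on `[1, ∞)`, and
`Σ_{i≥1} η(i) - Σ_{i≤0} (1 - η(i)) = n`. -/
def Ablock (n : ℤ) : Set (ℤ → Bool) :=
  {η | {i : ℤ | i ≤ 0 ∧ η i = false}.Finite ∧ {i : ℤ | 1 ≤ i ∧ η i = true}.Finite ∧
    ({i : ℤ | 1 ≤ i ∧ η i = true}.ncard : ℤ) - ({i : ℤ | i ≤ 0 ∧ η i = false}.ncard : ℤ) = n}

namespace Stmt19Aux

/-- inverse of the shift -/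
def sInv (η : ℤ → Bool) : ℤ → Bool := fun i => η (i - 1)

lemma shift_sInv (η : ℤ → Bool) : shiftConf (sInv η) = η := by
  funext i; simp [shiftConf, sInv]

lemma sInv_shift (η : ℤ → Bool) : sInv (shiftConf η) = η := by
  funext i; simp [shiftConf, sInv]

lemma sInv_injective : Function.Injective sInv :=
  Function.LeftInverse.injective shift_sInv

lemma measurable_shiftConf : Measurable shiftConf :=
  measurable_pi_lambda _ (fun i => measurable_pi_apply (i+1))

lemma measSet (k : ℤ) (b : Bool) : MeasurableSet {η : ℤ → Bool | η k = b} :=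
  (measurable_pi_apply (X := fun _ : ℤ => Bool) k) (measurableSet_singleton b)

lemma preimage_shift (E : Set (ℤ → Bool)) : shiftConf ⁻¹' E = sInv '' E := by
  ext η
  constructor
  · intro h; exact ⟨shiftConf η, h, sInv_shift η⟩
  · rintro ⟨ξ, hξ, rfl⟩; simpa [Set.mem_preimage, shift_sInv] using hξ

/-- membership in `Ablock` shifts. -/
lemma mem_Ablock_shift (η : ℤ → Bool) (n : ℤ) :
    η ∈ Ablock n ↔ shiftConf η ∈ Ablock (n - 1) := by
  have hinj : Function.Injective (fun j : ℤ => j - 1) := fun a b h => by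
    simpa using h
  have hF' : {i : ℤ | i ≤ 0 ∧ shiftConf η i = false}
      = (fun j => j - 1) '' ({i : ℤ | i ≤ 0 ∧ η i = false} ∪ {j : ℤ | j = 1 ∧ η j = false}) := by
    ext i
    simp only [Set.mem_image, Set.mem_union, Set.mem_setOf_eq, shiftConf]
    constructor
    · rintro ⟨hi, hval⟩
      by_cases h1 : i + 1 ≤ 0
      · exact ⟨i + 1, Or.inl ⟨h1, hval⟩, by omega⟩
      · exact ⟨i + 1, Or.inr ⟨by omega, hval⟩, by omega⟩
    · rintro ⟨j, hj, rfl⟩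
      have hji : j - 1 + 1 = j := by omega
      rw [hji]
      rcases hj with ⟨h1, h2⟩ | ⟨h1, h2⟩
      · exact ⟨by omega, h2⟩
      · exact ⟨by omega, h2⟩
  have hG' : {i : ℤ | 1 ≤ i ∧ shiftConf η i = true}
      = (fun j => j - 1) '' ({i : ℤ | 1 ≤ i ∧ η i = true} \ {1}) := by
    ext i
    simp only [Set.mem_image, Set.mem_diff, Set.mem_singleton_iff, Set.mem_setOf_eq, shiftConf]
    constructor
    · rintro ⟨hi, hval⟩
      exact ⟨i + 1, ⟨⟨by omega, hval⟩, by omega⟩, by omega⟩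
    · rintro ⟨j, ⟨⟨h1, h2⟩, h3⟩, rfl⟩
      have hji : j - 1 + 1 = j := by omega
      rw [hji]
      exact ⟨by omega, h2⟩
  have main : ∀ (_ : {i : ℤ | i ≤ 0 ∧ η i = false}.Finite)
      (_ : {i : ℤ | 1 ≤ i ∧ η i = true}.Finite),
      {i : ℤ | i ≤ 0 ∧ shiftConf η i = false}.Finite ∧
      {i : ℤ | 1 ≤ i ∧ shiftConf η i = true}.Finite ∧
      ({i : ℤ | 1 ≤ i ∧ shiftConf η i = true}.ncard : ℤ)
          - ({i : ℤ | i ≤ 0 ∧ shiftConf η i = false}.ncard : ℤ)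
        = ({i : ℤ | 1 ≤ i ∧ η i = true}.ncard : ℤ)
          - ({i : ℤ | i ≤ 0 ∧ η i = false}.ncard : ℤ) - 1 := by
    intro hF hG
    have hsub : {j : ℤ | j = 1 ∧ η j = false} ⊆ {(1:ℤ)} := fun x hx => hx.1
    have hFin1 : ({j : ℤ | j = 1 ∧ η j = false}).Finite :=
      (Set.finite_singleton 1).subset hsub
    refine ⟨hF' ▸ ((hF.union hFin1).image _), hG' ▸ ((hG.diff (t := {1})).image _), ?_⟩
    rw [hF', hG', Set.ncard_image_of_injective _ hinj, Set.ncard_image_of_injective _ hinj]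
    cases hb : η 1
    · have e1 : {j : ℤ | j = 1 ∧ η j = false} = {1} := by
        ext j; simp only [Set.mem_setOf_eq, Set.mem_singleton_iff]
        constructor
        · exact fun h => h.1
        · rintro rfl; exact ⟨rfl, hb⟩
      have e2 : {i : ℤ | 1 ≤ i ∧ η i = true} \ {1} = {i : ℤ | 1 ≤ i ∧ η i = true} :=
        Set.diff_singleton_eq_self (by simp [hb])
      have h1F : (1:ℤ) ∉ {i : ℤ | i ≤ 0 ∧ η i = false} := by
        simp only [Set.mem_setOf_eq]; omega
      rw [e1, e2, Set.union_singleton, Set.ncard_insert_of_notMem h1F hF]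
      push_cast
      ring
    · have e1 : {j : ℤ | j = 1 ∧ η j = false} = ∅ := by
        ext j; simp only [Set.mem_setOf_eq, Set.mem_empty_iff_false, iff_false, not_and]
        rintro rfl; simp [hb]
      have h1G : (1:ℤ) ∈ {i : ℤ | 1 ≤ i ∧ η i = true} := ⟨le_refl 1, hb⟩
      have hd := Set.ncard_diff_singleton_of_mem h1G
      have hpos : 0 < {i : ℤ | 1 ≤ i ∧ η i = true}.ncard :=
        (Set.ncard_pos hG).2 ⟨1, h1G⟩
      rw [e1, Set.union_empty, hd]
      omega
  constructor
  · rintro ⟨hF, hG, hcard⟩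
    obtain ⟨h1, h2, h3⟩ := main hF hG
    exact ⟨h1, h2, by rw [h3, hcard]⟩
  · rintro ⟨hFm, hGm, hcard'⟩
    have hFfin : {i : ℤ | i ≤ 0 ∧ η i = false}.Finite := by
      have : ({i : ℤ | i ≤ 0 ∧ η i = false} ∪ {j : ℤ | j = 1 ∧ η j = false}).Finite :=
        Set.Finite.of_finite_image (hF' ▸ hFm) (hinj.injOn)
      exact this.subset Set.subset_union_left
    have hGfin : {i : ℤ | 1 ≤ i ∧ η i = true}.Finite := by
      have hd : ({i : ℤ | 1 ≤ i ∧ η i = true} \ {1}).Finite :=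
        Set.Finite.of_finite_image (hG' ▸ hGm) (hinj.injOn)
      have : {i : ℤ | 1 ≤ i ∧ η i = true} ⊆ ({i : ℤ | 1 ≤ i ∧ η i = true} \ {1}) ∪ {1} := by
        intro x hx
        by_cases hx1 : x = (1:ℤ)
        · exact Or.inr hx1
        · exact Or.inl ⟨hx, hx1⟩
      exact (hd.union (Set.finite_singleton 1)).subset this
    obtain ⟨h1, h2, h3⟩ := main hFfin hGfin
    rw [h3] at hcard'
    exact ⟨hFfin, hGfin, by omega⟩

lemma Ablock_shift_preimage (n : ℤ) : shiftConf ⁻¹' Ablock (n-1) = Ablock n := by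
  ext η; simp [Set.mem_preimage, ← mem_Ablock_shift]

/-- Countability of Ablock. -/
lemma Ablock_countable (m : ℤ) : (Ablock m).Countable := by
  have h : Ablock m ⊆ ⋃ s : Finset ℤ, {η : ℤ → Bool | ∀ i, i ∉ s → η i = decide (i ≤ 0)} := by
    rintro η ⟨hF, hG, -⟩
    refine Set.mem_iUnion.2 ⟨hF.toFinset ∪ hG.toFinset, fun i hi => ?_⟩
    simp only [Finset.mem_union, Set.Finite.mem_toFinset, Set.mem_setOf_eq, not_or] at hi
    by_cases h0 : i ≤ 0
    · simp only [h0, decide_eq_true_eq, decide_eq_true]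
      cases hηi : η i
      · exact absurd ⟨h0, hηi⟩ hi.1
      · simp [h0]
    · simp only [h0]
      cases hηi : η i
      · simp [h0]
      · exact absurd ⟨by omega, hηi⟩ hi.2
  refine Set.Countable.mono h (Set.countable_iUnion fun s => ?_)
  have hfin : {η : ℤ → Bool | ∀ i, i ∉ s → η i = decide (i ≤ 0)}.Finite := by
    apply Set.Finite.of_finite_image (f := fun η => (fun i : s => η i))
    · exact Set.toFinite _
    · intro a ha b hb hab
      funext i
      by_cases hi : i ∈ s
      · exact congrFun hab ⟨i, hi⟩
      · rw [ha i hi, hb i hi]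
  exact hfin.countable

lemma Ablock_measurable (m : ℤ) : MeasurableSet (Ablock m) :=
  (Ablock_countable m).measurableSet

/-- weights -/
noncomputable def pb (q : ℝ) (k : ℤ) : ℝ := q ^ (-k) / (1 + q ^ (-k))

noncomputable def wb (q : ℝ) (k : ℤ) (b : Bool) : ℝ := if b then pb q k else 1 - pb q k

section weights
variable {q : ℝ} (hq0 : 0 < q)
include hq0

lemma zpow_pos' (k : ℤ) : 0 < q ^ k := zpow_pos hq0 k

lemma one_add_pos (k : ℤ) : 0 < 1 + q ^ (-k) := by positivity

lemma pb_pos (k : ℤ) : 0 < pb q k := div_pos (zpow_pos hq0 _) (one_add_pos hq0 k)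

lemma pb_lt_one (k : ℤ) : pb q k < 1 := by
  rw [pb, div_lt_one (one_add_pos hq0 k)]; linarith

lemma wb_pos (k : ℤ) (b : Bool) : 0 < wb q k b := by
  cases b <;> simp [wb]
  · linarith [pb_lt_one hq0 k]
  · exact pb_pos hq0 k

lemma wb_nonneg (k : ℤ) (b : Bool) : 0 ≤ wb q k b := (wb_pos hq0 k b).le

lemma wb_false (k : ℤ) : wb q k false = 1 / (1 + q ^ (-k)) := by
  have h := (one_add_pos hq0 k).ne'
  simp only [wb, pb, Bool.false_eq_true, if_false]
  field_simp
  ring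

/-- key pointwise identity -/
lemma wb_succ (k : ℤ) (b : Bool) :
    wb q (k + 1) b
      = wb q k b * ((if b then q⁻¹ else 1) * ((1 + q ^ (-k)) / (1 + q ^ (-(k+1))))) := by
  have hq := hq0.ne'
  have h1 : q ^ (-(k+1)) = q ^ (-k) * q⁻¹ := by
    rw [neg_add, zpow_add₀ hq, zpow_neg, zpow_neg, zpow_one]
  have h2 := (one_add_pos hq0 k).ne'
  have h3 := (one_add_pos hq0 (k+1)).ne'
  have h2' : 0 < q ^ (-k) := zpow_pos hq0 _
  cases b <;> simp only [wb, if_true, if_false, Bool.false_eq_true, pb, h1] <;>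
    field_simp <;> ring

lemma telescope (a : ℤ) : ∀ b : ℤ, a - 1 ≤ b →
    ∏ j ∈ Finset.Icc a b, ((1 + q ^ (-j)) / (1 + q ^ (-(j+1))))
      = (1 + q ^ (-a)) / (1 + q ^ (-(b+1))) := by
  refine Int.le_induction ?_ ?_
  · rw [Finset.Icc_eq_empty (by omega), Finset.prod_empty]
    rw [show a - 1 + 1 = a from by ring, div_self (one_add_pos hq0 a).ne']
  · intro b hab ih
    have hins : Finset.Icc a (b+1) = insert (b+1) (Finset.Icc a b) := by
      ext x; simp only [Finset.mem_Icc, Finset.mem_insert]; omega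
    have hnm : (b+1) ∉ Finset.Icc a b := by simp only [Finset.mem_Icc]; omega
    rw [hins, Finset.prod_insert hnm, ih]
    have h1 := (one_add_pos hq0 (b+1)).ne'
    have h2 := (one_add_pos hq0 (b+1+1)).ne'
    field_simp

lemma prod_shift (m : ℤ) (η : ℤ → Bool) (N₀ N : ℕ)
    (h1N : 1 ≤ N₀) (hN : N₀ ≤ N)
    (hlow : ∀ k : ℤ, k ≤ -(N₀:ℤ) → η k = true)
    (hhigh : ∀ k : ℤ, (N₀:ℤ) ≤ k → η k = false)
    (hF : {i : ℤ | i ≤ 0 ∧ η i = false}.Finite)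
    (hG : {i : ℤ | 1 ≤ i ∧ η i = true}.Finite)
    (hcard : ({i : ℤ | 1 ≤ i ∧ η i = true}.ncard : ℤ)
        - ({i : ℤ | i ≤ 0 ∧ η i = false}.ncard : ℤ) = m) :
    ∏ k ∈ Finset.Icc (-(N:ℤ)) (N:ℤ), wb q k (η (k - 1))
      = q ^ (-(m+1)) * ∏ k ∈ Finset.Icc (-(N:ℤ)) (N:ℤ), wb q k (η k) := by
  classical
  have hq := hq0.ne'
  -- Step 1: reindex
  have hreidx : ∏ k ∈ Finset.Icc (-(N:ℤ)) (N:ℤ), wb q k (η (k - 1))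
      = ∏ j ∈ Finset.Icc (-(N:ℤ)-1) ((N:ℤ)-1), wb q (j+1) (η j) := by
    rw [show Finset.Icc (-(N:ℤ)-1) ((N:ℤ)-1)
        = (Finset.Icc (-(N:ℤ)) (N:ℤ)).map (addRightEmbedding (-1)) from by
      rw [Finset.map_add_right_Icc]; congr 1 <;> ring]
    rw [Finset.prod_map]
    refine Finset.prod_congr rfl fun k _ => ?_
    simp only [addRightEmbedding_apply]
    rw [show k + -1 + 1 = k from by ring, show k + -1 = k - 1 from by ring]
  -- Step 2: pointwise factorization
  set T : ℕ := ((Finset.Icc (-(N:ℤ)-1) ((N:ℤ)-1)).filter (fun j => η j = true)).card with hTdef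
  have hpt : ∏ j ∈ Finset.Icc (-(N:ℤ)-1) ((N:ℤ)-1), wb q (j+1) (η j)
      = (∏ j ∈ Finset.Icc (-(N:ℤ)-1) ((N:ℤ)-1), wb q j (η j))
        * ((∏ j ∈ Finset.Icc (-(N:ℤ)-1) ((N:ℤ)-1), (if η j then q⁻¹ else 1))
          * ∏ j ∈ Finset.Icc (-(N:ℤ)-1) ((N:ℤ)-1), ((1 + q ^ (-j)) / (1 + q ^ (-(j+1))))) := by
    rw [← Finset.prod_mul_distrib, ← Finset.prod_mul_distrib]
    exact Finset.prod_congr rfl fun j _ => wb_succ hq0 j (η j)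
  -- Step 3: the if-product
  have hite : (∏ j ∈ Finset.Icc (-(N:ℤ)-1) ((N:ℤ)-1), (if η j then q⁻¹ else 1)) = q⁻¹ ^ T := by
    rw [Finset.prod_ite (fun _ => q⁻¹) (fun _ => (1:ℝ)), Finset.prod_const,
      Finset.prod_const_one, mul_one]
  -- Step 4: boundary terms
  have hηlo : η (-(N:ℤ)-1) = true := hlow _ (by omega)
  have hηhi : η (N:ℤ) = false := hhigh _ (by omega)
  have hIleft : Finset.Icc (-(N:ℤ)-1) ((N:ℤ)-1)
      = insert (-(N:ℤ)-1) (Finset.Icc (-(N:ℤ)) ((N:ℤ)-1)) := by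
    ext x; simp only [Finset.mem_Icc, Finset.mem_insert]; omega
  have hIright : Finset.Icc (-(N:ℤ)) (N:ℤ) = insert (N:ℤ) (Finset.Icc (-(N:ℤ)) ((N:ℤ)-1)) := by
    ext x; simp only [Finset.mem_Icc, Finset.mem_insert]; omega
  have hnl : (-(N:ℤ)-1) ∉ Finset.Icc (-(N:ℤ)) ((N:ℤ)-1) := by
    simp only [Finset.mem_Icc]; omega
  have hnr : (N:ℤ) ∉ Finset.Icc (-(N:ℤ)) ((N:ℤ)-1) := by
    simp only [Finset.mem_Icc]; omega
  -- Step 5: telescoping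
  have htel : ∏ j ∈ Finset.Icc (-(N:ℤ)-1) ((N:ℤ)-1), ((1 + q ^ (-j)) / (1 + q ^ (-(j+1))))
      = (1 + q ^ ((N:ℤ)+1)) / (1 + q ^ (-(N:ℤ))) := by
    rw [telescope hq0 _ _ (by omega)]
    rw [show -(-(N:ℤ)-1) = (N:ℤ)+1 from by ring, show -(((N:ℤ)-1)+1) = -(N:ℤ) from by ring]
  -- Step 6: count
  have hT : (T : ℤ) = (N:ℤ) + 2 + m := by
    have hsplit : Finset.Icc (-(N:ℤ)-1) ((N:ℤ)-1)
        = Finset.Icc (-(N:ℤ)-1) 0 ∪ Finset.Icc 1 ((N:ℤ)-1) := by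
      ext x; simp only [Finset.mem_Icc, Finset.mem_union]; omega
    have hdisj : Disjoint (Finset.Icc (-(N:ℤ)-1) 0) (Finset.Icc 1 ((N:ℤ)-1)) := by
      rw [Finset.disjoint_left]; intro x hx hx'
      simp only [Finset.mem_Icc] at hx hx'; omega
    have hcardsum : T = ((Finset.Icc (-(N:ℤ)-1) 0).filter (fun j => η j = true)).card
        + ((Finset.Icc 1 ((N:ℤ)-1)).filter (fun j => η j = true)).card := by
      rw [hTdef, hsplit, Finset.filter_union,
        Finset.card_union_of_disjoint (Finset.disjoint_filter_filter hdisj)]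
    have hfneg : (Finset.Icc (-(N:ℤ)-1) 0).filter (fun j => ¬(η j = true)) = hF.toFinset := by
      ext j
      simp only [Finset.mem_filter, Finset.mem_Icc, Set.Finite.mem_toFinset, Set.mem_setOf_eq,
        Bool.not_eq_true]
      constructor
      · rintro ⟨⟨-, h2⟩, h3⟩; exact ⟨h2, h3⟩
      · rintro ⟨h1, h2⟩
        have : ¬(j ≤ -(N₀:ℤ)) := fun hc => by simp [hlow j hc] at h2
        exact ⟨⟨by omega, h1⟩, h2⟩
    have hfpos : (Finset.Icc 1 ((N:ℤ)-1)).filter (fun j => η j = true) = hG.toFinset := by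
      ext j
      simp only [Finset.mem_filter, Finset.mem_Icc, Set.Finite.mem_toFinset, Set.mem_setOf_eq]
      constructor
      · rintro ⟨⟨h1, -⟩, h3⟩; exact ⟨h1, h3⟩
      · rintro ⟨h1, h2⟩
        have : ¬((N₀:ℤ) ≤ j) := fun hc => by simp [hhigh j hc] at h2
        exact ⟨⟨h1, by omega⟩, h2⟩
    have hsum := Finset.card_filter_add_card_filter_not
      (s := Finset.Icc (-(N:ℤ)-1) 0) (fun j => η j = true)
    rw [hfneg] at hsum
    have hc1 : (Finset.Icc (-(N:ℤ)-1) 0).card = N + 2 := by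
      rw [Int.card_Icc]; omega
    rw [hc1] at hsum
    have hFc : {i : ℤ | i ≤ 0 ∧ η i = false}.ncard = hF.toFinset.card :=
      Set.ncard_eq_toFinset_card _ hF
    have hGc : {i : ℤ | 1 ≤ i ∧ η i = true}.ncard = hG.toFinset.card :=
      Set.ncard_eq_toFinset_card _ hG
    rw [hFc, hGc] at hcard
    rw [hcardsum, hfpos]
    omega
  -- Step 7: assemble
  rw [hreidx, hpt, hite, htel, hIleft, hIright, Finset.prod_insert hnl, Finset.prod_insert hnr,
    hηlo, hηhi]
  have hwlo : wb q (-(N:ℤ)-1) true = q ^ ((N:ℤ)+1) / (1 + q ^ ((N:ℤ)+1)) := by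
    simp only [wb, if_true, pb]
    rw [show -(-(N:ℤ)-1) = (N:ℤ)+1 from by ring]
  have hwhi : wb q (N:ℤ) false = 1 / (1 + q ^ (-(N:ℤ))) := wb_false hq0 _
  rw [hwlo, hwhi]
  have e1 : (q⁻¹)^T = q ^ (-(T:ℤ)) := by
    rw [inv_pow, ← zpow_natCast q T, ← zpow_neg]
  have e2 : q ^ ((N:ℤ)+1) * q ^ (-(T:ℤ)) = q ^ (-(m+1)) := by
    rw [← zpow_add₀ hq]; congr 1; omega
  have h3 : (0:ℝ) < 1 + q ^ ((N:ℤ)+1) := by positivity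
  have h4 : (0:ℝ) < 1 + q ^ (-(N:ℤ)) := by positivity
  rw [e1, ← e2]
  field_simp

end weights

section measure
variable {q : ℝ} (hq0 : 0 < q) {μ : Measure (ℤ → Bool)} [IsProbabilityMeasure μ]
  (hindep : iIndepFun (fun k (η : ℤ → Bool) => η k) μ)
  (hmarg : ∀ k : ℤ, μ {η | η k = true} = ENNReal.ofReal (q ^ (-k) / (1 + q ^ (-k))))
include hq0 hmarg

lemma marg_eq (k : ℤ) (b : Bool) :
    μ {η : ℤ → Bool | η k = b} = ENNReal.ofReal (wb q k b) := by
  cases b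
  · have hc : {η : ℤ → Bool | η k = false} = {η : ℤ → Bool | η k = true}ᶜ := by
      ext η; simp
    have hm : MeasurableSet {η : ℤ → Bool | η k = true} := measSet k true
    rw [hc, measure_compl hm (measure_ne_top μ _),
      hmarg k, measure_univ, wb_false hq0, ← ENNReal.ofReal_one,
      ← ENNReal.ofReal_sub _ (div_nonneg (zpow_pos hq0 _).le (one_add_pos hq0 k).le)]
    congr 1
    have h2 := (one_add_pos hq0 k).ne'
    field_simp [pb]
    ring
  · rw [hmarg k]; rfl

include hindep in
lemma cyl_meas (s : Finset ℤ) (ξ : ℤ → Bool) :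
    μ (⋂ k ∈ s, {ω : ℤ → Bool | ω k = ξ k})
      = ∏ k ∈ s, ENNReal.ofReal (wb q k (ξ k)) := by
  have h := (iIndepFun_iff_measure_inter_preimage_eq_mul.1 hindep) s
    (sets := fun k => ({ξ k} : Set Bool)) (fun i _ => measurableSet_singleton _)
  have he : ∀ k : ℤ, (fun (η : ℤ → Bool) => η k) ⁻¹' ({ξ k} : Set Bool)
      = {ω : ℤ → Bool | ω k = ξ k} := fun k => rfl
  simp only [he] at h
  rw [h]
  exact Finset.prod_congr rfl (fun k _ => marg_eq hq0 hmarg k (ξ k))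

include hindep in
lemma singleton_tendsto (ξ : ℤ → Bool) :
    Filter.Tendsto
      (fun N : ℕ => ∏ k ∈ Finset.Icc (-(N:ℤ)) (N:ℤ), ENNReal.ofReal (wb q k (ξ k)))
      Filter.atTop (nhds (μ {ξ})) := by
  have hmeas : ∀ N : ℕ, MeasurableSet (⋂ k ∈ Finset.Icc (-(N:ℤ)) (N:ℤ), {ω : ℤ → Bool | ω k = ξ k}) := by
    intro N
    exact MeasurableSet.biInter (Finset.Icc _ _).countable_toSet
      (fun k _ => measSet k (ξ k))
  have hanti : Antitone (fun N : ℕ => ⋂ k ∈ Finset.Icc (-(N:ℤ)) (N:ℤ), {ω : ℤ → Bool | ω k = ξ k}) := by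
    intro a b hab ω hω
    simp only [Set.mem_iInter] at hω ⊢
    intro k hk
    apply hω
    simp only [Finset.mem_Icc] at hk ⊢
    omega
  have hint : (⋂ N : ℕ, ⋂ k ∈ Finset.Icc (-(N:ℤ)) (N:ℤ), {ω : ℤ → Bool | ω k = ξ k}) = {ξ} := by
    ext ω
    simp only [Set.mem_iInter, Set.mem_setOf_eq, Set.mem_singleton_iff, Finset.mem_Icc]
    constructor
    · intro h
      funext k
      exact h k.natAbs k (by omega)
    · rintro rfl k j hj; rfl
  have := tendsto_measure_iInter_atTop (μ := μ)
    (fun N => (hmeas N).nullMeasurableSet) hanti ⟨0, measure_ne_top μ _⟩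
  rw [hint] at this
  convert this using 2 with N
  exact (cyl_meas hq0 hindep hmarg _ ξ).symm

include hindep in
lemma sInv_singleton (m : ℤ) (η : ℤ → Bool) (hη : η ∈ Ablock m) :
    μ {sInv η} = ENNReal.ofReal (q ^ (-(m+1))) * μ {η} := by
  obtain ⟨hF, hG, hcard⟩ := hη
  obtain ⟨a, ha⟩ := hF.bddBelow
  obtain ⟨b, hb⟩ := hG.bddAbove
  set N₀ : ℕ := (max |a| |b| + 1).toNat with hN₀
  have hN₀z : (N₀ : ℤ) = max |a| |b| + 1 := by
    rw [hN₀, Int.toNat_of_nonneg (by positivity)]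
  have h1N : 1 ≤ N₀ := by
    have := abs_nonneg a
    have := abs_nonneg b
    omega
  have hlow : ∀ k : ℤ, k ≤ -(N₀:ℤ) → η k = true := by
    intro k hk
    by_contra h
    rw [Bool.not_eq_true] at h
    have hmem : k ∈ {i : ℤ | i ≤ 0 ∧ η i = false} := ⟨by omega, h⟩
    have := ha hmem
    have h1 : -|a| ≤ a := neg_abs_le a
    omega
  have hhigh : ∀ k : ℤ, (N₀:ℤ) ≤ k → η k = false := by
    intro k hk
    by_contra h
    rw [Bool.not_eq_false] at h
    have hmem : k ∈ {i : ℤ | 1 ≤ i ∧ η i = true} := ⟨by omega, h⟩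
    have := hb hmem
    have h1 : b ≤ |b| := le_abs_self b
    omega
  have key : ∀ N : ℕ, N₀ ≤ N →
      (∏ k ∈ Finset.Icc (-(N:ℤ)) (N:ℤ), ENNReal.ofReal (wb q k (sInv η k)))
        = ENNReal.ofReal (q ^ (-(m+1)))
          * ∏ k ∈ Finset.Icc (-(N:ℤ)) (N:ℤ), ENNReal.ofReal (wb q k (η k)) := by
    intro N hN
    rw [← ENNReal.ofReal_prod_of_nonneg (fun k _ => wb_nonneg hq0 k _),
      ← ENNReal.ofReal_prod_of_nonneg (fun k _ => wb_nonneg hq0 k _),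
      ← ENNReal.ofReal_mul (zpow_pos hq0 _).le]
    congr 1
    exact prod_shift hq0 m η N₀ N h1N hN hlow hhigh hF hG hcard
  have t1 := singleton_tendsto hq0 hindep hmarg (sInv η)
  have t2 : Filter.Tendsto
      (fun N : ℕ => ENNReal.ofReal (q ^ (-(m+1)))
        * ∏ k ∈ Finset.Icc (-(N:ℤ)) (N:ℤ), ENNReal.ofReal (wb q k (η k)))
      Filter.atTop (nhds (ENNReal.ofReal (q ^ (-(m+1))) * μ {η})) :=
    ENNReal.Tendsto.const_mul (singleton_tendsto hq0 hindep hmarg η)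
      (Or.inr ENNReal.ofReal_ne_top)
  have heq : (fun N : ℕ => ENNReal.ofReal (q ^ (-(m+1)))
        * ∏ k ∈ Finset.Icc (-(N:ℤ)) (N:ℤ), ENNReal.ofReal (wb q k (η k)))
      =ᶠ[Filter.atTop]
      (fun N : ℕ => ∏ k ∈ Finset.Icc (-(N:ℤ)) (N:ℤ), ENNReal.ofReal (wb q k (sInv η k))) :=
    Filter.eventually_atTop.2 ⟨N₀, fun N hN => (key N hN).symm⟩
  exact tendsto_nhds_unique t1 (t2.congr' heq)

include hindep in
lemma meas_sInv_image (m : ℤ) (E : Set (ℤ → Bool)) (hE : E ⊆ Ablock m) :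
    μ (sInv '' E) = ENNReal.ofReal (q ^ (-(m+1))) * μ E := by
  have hEc : E.Countable := (Ablock_countable m).mono hE
  have pd : ∀ S : Set (ℤ → Bool), S.PairwiseDisjoint (fun x => ({x} : Set (ℤ → Bool))) :=
    fun S x _ y _ hxy => Set.disjoint_singleton.2 hxy
  have h1 : μ E = ∑' x : E, μ {(x : ℤ → Bool)} := by
    conv_lhs => rw [← Set.biUnion_of_singleton E]
    exact measure_biUnion hEc (pd E) (fun b _ => measurableSet_singleton b)
  have h2 : μ (sInv '' E) = ∑' x : E, μ {sInv (x : ℤ → Bool)} := by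
    conv_lhs => rw [← Set.biUnion_of_singleton (sInv '' E)]
    rw [measure_biUnion (hEc.image _) (pd _) (fun b _ => measurableSet_singleton b)]
    rw [← Equiv.tsum_eq (Equiv.Set.image sInv E sInv_injective)
      (fun y => μ {(y : ℤ → Bool)})]
    exact tsum_congr fun x => rfl
  rw [h1, h2]
  rw [← ENNReal.tsum_mul_left]
  exact tsum_congr fun x => sInv_singleton hq0 hindep hmarg m x (hE x.2)

end measure

end Stmt19Aux

theorem stmt19 (q : ℝ) (hq0 : 0 < q) (hq1 : q ≠ 1)
    (μ : Measure (ℤ → Bool)) [IsProbabilityMeasure μ]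
    (hindep : iIndepFun (fun k (η : ℤ → Bool) => η k) μ)
    (hmarg : ∀ k : ℤ, μ {η | η k = true} = ENNReal.ofReal (q ^ (-k) / (1 + q ^ (-k))))
    (n : ℤ) :
    (ProbabilityTheory.cond μ (Ablock n)).map shiftConf
      = ProbabilityTheory.cond μ (Ablock (n - 1)) := by
  open Stmt19Aux in
  ext S hS
  rw [Measure.map_apply measurable_shiftConf hS,
    cond_apply (Ablock_measurable n) μ, cond_apply (Ablock_measurable (n-1)) μ]
  set c : ENNReal := ENNReal.ofReal (q ^ (-(n - 1 + 1))) with hc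
  have hAB : Ablock n ∩ shiftConf ⁻¹' S = shiftConf ⁻¹' (Ablock (n-1) ∩ S) := by
    rw [Set.preimage_inter, Ablock_shift_preimage]
  have h1 : μ (shiftConf ⁻¹' (Ablock (n-1) ∩ S)) = c * μ (Ablock (n-1) ∩ S) := by
    rw [preimage_shift]
    exact meas_sInv_image hq0 hindep hmarg (n-1) _ Set.inter_subset_left
  have h2 : μ (Ablock n) = c * μ (Ablock (n-1)) := by
    rw [← Ablock_shift_preimage n, preimage_shift]
    exact meas_sInv_image hq0 hindep hmarg (n-1) _ subset_rfl
  rw [hAB, h1, h2]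
  have hc0 : c ≠ 0 := (ENNReal.ofReal_pos.2 (zpow_pos hq0 _)).ne'
  have hct : c ≠ ⊤ := ENNReal.ofReal_ne_top
  rw [ENNReal.mul_inv (Or.inl hc0) (Or.inl hct)]
  calc c⁻¹ * (μ (Ablock (n-1)))⁻¹ * (c * μ (Ablock (n-1) ∩ S))
      = (c⁻¹ * c) * ((μ (Ablock (n-1)))⁻¹ * μ (Ablock (n-1) ∩ S)) := by ring
    _ = (μ (Ablock (n-1)))⁻¹ * μ (Ablock (n-1) ∩ S) := by
        rw [ENNReal.inv_mul_cancel hc0 hct, one_mul]
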